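/- Let M = (m_i)_{i=0}^∞ be a sequence of integers with m_0 = 1 and m_i ≥ 2 for all i ≥ 1, and assume that for every index r ≥ 1 and every prime p, if p divides m_r then p ≥ r. Then for every pair of positive integers n and r, the number p_M(m_1 m_2 ⋯ m_r n − 1) is divisible by the product ∏_{t=2}^{r} m_t. -/

import Mathlib

/-- `pM m n` = number of partitions of `n` into parts of the form `m 0 * m 1 * ⋯ * m r`. -/
noncomputable def pM (m : ℕ → ℕ) (n : ℕ) : ℕ :=
  Nat.card {p : n.Partition // ∀ j ∈ p.parts, ∃ r : ℕ, j = ∏ i ∈ Finset.range (r + 1), m i}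

namespace PMaux

def Δ (w : ℕ → ℤ) : ℕ → ℤ := fun x => w (x + 1) - w x

lemma delta_zero : Δ 0 = 0 := by funext x; simp [Δ]

lemma delta_add (w v : ℕ → ℤ) : Δ (w + v) = Δ w + Δ v := by
  funext x; simp [Δ]; ring

lemma delta_iter_add (d : ℕ) (w v : ℕ → ℤ) : Δ^[d] (w + v) = Δ^[d] w + Δ^[d] v := by
  induction d generalizing w v with
  | zero => simp
  | succ d ih => simp only [Function.iterate_succ_apply, delta_add, ih]

lemma delta_iter_zero (d : ℕ) : Δ^[d] (0 : ℕ → ℤ) = 0 := by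
  induction d with
  | zero => simp
  | succ d ih => simp only [Function.iterate_succ_apply, delta_zero, ih]

lemma delta_smul (c : ℤ) (w : ℕ → ℤ) : Δ (fun x => c * w x) = fun x => c * Δ w x := by
  funext x; simp [Δ]; ring

lemma delta_iter_smul (d : ℕ) (c : ℤ) (w : ℕ → ℤ) :
    Δ^[d] (fun x => c * w x) = fun x => c * Δ^[d] w x := by
  induction d generalizing w with
  | zero => simp
  | succ d ih => simp only [Function.iterate_succ_apply, delta_smul, ih]

lemma delta_iter_sum_zero (d : ℕ) (s : Finset ℕ) (f : ℕ → ℕ → ℤ)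
    (hf : ∀ i ∈ s, Δ^[d] (f i) = 0) : Δ^[d] (fun x => ∑ i ∈ s, f i x) = 0 := by
  induction s using Finset.induction with
  | empty => simp only [Finset.sum_empty]; exact delta_iter_zero d
  | insert a s hx ih =>
      have : (fun x => ∑ i ∈ insert a s, f i x) = f a + fun x => ∑ i ∈ s, f i x := by
        funext x; simp [Finset.sum_insert hx]
      rw [this, delta_iter_add, hf a (by simp), ih (fun i hi => hf i (by simp [hi]))]
      simp

lemma delta_iter_comp (d : ℕ) (w : ℕ → ℤ) (hw : Δ^[d] w = 0) (m c : ℕ) :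
    Δ^[d] (fun x => w (m * x + c)) = 0 := by
  induction d generalizing w c with
  | zero => funext x; simpa using congrFun hw (m * x + c)
  | succ d ih =>
      have hD : Δ^[d] (Δ w) = 0 := by
        rw [← Function.iterate_succ_apply]; exact hw
      have key : Δ (fun x => w (m * x + c)) = fun x => ∑ i ∈ Finset.range m, Δ w (m * x + c + i) := by
        funext x
        have h2 : Δ (fun x => w (m * x + c)) x = w (m * x + c + m) - w (m * x + c + 0) := by
          simp only [Δ, add_zero]; congr 2; ring
        rw [h2, ← Finset.sum_range_sub (fun i => w (m * x + c + i)) m]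
        exact Finset.sum_congr rfl fun i _ => by simp [Δ, add_assoc]
      rw [Function.iterate_succ_apply, key]
      exact delta_iter_sum_zero d _ _ (fun i _ => by
        have := ih (Δ w) hD (c + i)
        simpa [add_assoc] using this)

lemma newton (l : ℕ) : ∀ w : ℕ → ℤ, w l = ∑ e ∈ Finset.range (l + 1), Δ^[e] w 0 * (l.choose e : ℤ) := by
  induction l with
  | zero => intro w; simp
  | succ l ih =>
      intro w
      have h1 : w (l + 1) = w l + Δ w l := by simp [Δ]
      rw [h1, ih w, ih (Δ w)]
      have hiter : ∀ e, Δ^[e] (Δ w) = Δ^[e + 1] w := by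
        intro e; rw [Function.iterate_succ_apply]
      rw [Finset.sum_range_succ' (fun e => Δ^[e] w 0 * ((l+1).choose e : ℤ)) (l + 1)]
      simp only [hiter]
      have hchoose : ∀ e, ((l+1).choose (e+1) : ℤ) = (l.choose e : ℤ) + (l.choose (e+1) : ℤ) := by
        intro e; rw [Nat.choose_succ_succ]; push_cast; ring
      have expand : ∑ e ∈ Finset.range (l + 1), Δ^[e+1] w 0 * ((l+1).choose (e+1) : ℤ)
          = (∑ e ∈ Finset.range (l + 1), Δ^[e+1] w 0 * (l.choose e : ℤ))
            + ∑ e ∈ Finset.range (l + 1), Δ^[e+1] w 0 * (l.choose (e+1) : ℤ) := by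
        rw [← Finset.sum_add_distrib]
        exact Finset.sum_congr rfl fun e _ => by rw [hchoose]; ring
      rw [expand]
      have A : ∑ e ∈ Finset.range (l + 1), Δ^[e] w 0 * (l.choose e : ℤ)
          = (∑ e ∈ Finset.range l, Δ^[e+1] w 0 * (l.choose (e+1) : ℤ)) + w 0 := by
        rw [Finset.sum_range_succ' (fun e => Δ^[e] w 0 * (l.choose e : ℤ)) l]
        simp
      have B : ∑ e ∈ Finset.range (l + 1), Δ^[e+1] w 0 * (l.choose (e+1) : ℤ)
          = ∑ e ∈ Finset.range l, Δ^[e+1] w 0 * (l.choose (e+1) : ℤ) := by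
        rw [Finset.sum_range_succ]
        simp [Nat.choose_succ_self]
      rw [A, B]
      simp
      ring

lemma newton_trunc (D : ℕ) (w : ℕ → ℤ) (hw : Δ^[D] w = 0) (l : ℕ) :
    w l = ∑ e ∈ Finset.range D, Δ^[e] w 0 * (l.choose e : ℤ) := by
  have hvan : ∀ e, D ≤ e → Δ^[e] w = 0 := by
    intro e he
    obtain ⟨c, rfl⟩ := Nat.exists_eq_add_of_le he
    rw [add_comm, Function.iterate_add_apply, hw, delta_iter_zero]
  rcases le_or_gt (l + 1) D with h | h
  · rw [newton l w, ← Finset.sum_range_add_sum_Ico _ (by omega : l + 1 ≤ D)]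
    have : ∑ e ∈ Finset.Ico (l+1) D, Δ^[e] w 0 * (l.choose e : ℤ) = 0 := by
      apply Finset.sum_eq_zero; intro e he
      simp only [Finset.mem_Ico] at he
      rw [Nat.choose_eq_zero_of_lt (by omega)]; simp
    rw [this]; simp
  · rw [newton l w, ← Finset.sum_range_add_sum_Ico _ (by omega : D ≤ l + 1)]
    have : ∑ e ∈ Finset.Ico D (l+1), Δ^[e] w 0 * (l.choose e : ℤ) = 0 := by
      apply Finset.sum_eq_zero; intro e he
      simp only [Finset.mem_Ico] at he
      rw [hvan e (by omega)]; simp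
    rw [this]; simp

lemma hockey (e N : ℕ) : ∑ l ∈ Finset.range N, (l.choose e : ℤ) = (N.choose (e + 1) : ℤ) := by
  induction N with
  | zero => simp
  | succ N ih => rw [Finset.sum_range_succ, ih, Nat.choose_succ_succ N e]; push_cast; ring

lemma m_dvd_choose (m x e : ℕ) (hcop : ∀ p : ℕ, p.Prime → p ∣ m → e + 1 < p) :
    (m : ℤ) ∣ ((m * x).choose (e + 1) : ℤ) := by
  rcases Nat.eq_zero_or_pos x with rfl | hx
  · simp [Nat.choose_eq_zero_of_lt]
  rcases Nat.eq_zero_or_pos m with rfl | hm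
  · simp
  have hcop' : Nat.Coprime m (e + 1) := by
    by_contra h
    have hg0 : 0 < Nat.gcd m (e + 1) := Nat.gcd_pos_of_pos_left _ hm
    have hg : 2 ≤ Nat.gcd m (e + 1) := by
      rcases Nat.lt_or_ge (Nat.gcd m (e+1)) 2 with h2 | h2
      · interval_cases h : Nat.gcd m (e + 1) <;> simp_all [Nat.Coprime]
      · exact h2
    set g := Nat.gcd m (e + 1)
    have hp : (g.minFac).Prime := Nat.minFac_prime (by omega)
    have hpm : g.minFac ∣ m := (Nat.minFac_dvd g).trans (Nat.gcd_dvd_left _ _)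
    have hpe : g.minFac ∣ e + 1 := (Nat.minFac_dvd g).trans (Nat.gcd_dvd_right _ _)
    have := hcop _ hp hpm
    have := Nat.le_of_dvd (by omega) hpe
    omega
  have hmx : 1 ≤ m * x := Nat.one_le_iff_ne_zero.mpr (by positivity)
  have key : (m * x) * Nat.choose (m * x - 1) e = Nat.choose (m * x) (e + 1) * (e + 1) := by
    have := Nat.add_one_mul_choose_eq (m * x - 1) e
    rw [show m * x - 1 + 1 = m * x by omega] at this
    exact this
  have hdvd : m ∣ Nat.choose (m * x) (e + 1) * (e + 1) := by
    rw [← key]; exact Dvd.dvd.mul_right ⟨x, rfl⟩ _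
  have : m ∣ Nat.choose (m * x) (e + 1) := hcop'.dvd_of_dvd_mul_right hdvd
  exact_mod_cast Int.natCast_dvd_natCast.mpr this

noncomputable def cnt (S : ℕ → Prop) (n : ℕ) : ℕ :=
  Nat.card {p : n.Partition // ∀ j ∈ p.parts, S j}

lemma cnt_congr {S S' : ℕ → Prop} (h : ∀ x, S x ↔ S' x) (n : ℕ) : cnt S n = cnt S' n :=
  Nat.card_congr (Equiv.subtypeEquivRight fun p => by
    constructor <;> intro hp j hj
    · exact (h j).1 (hp j hj)
    · exact (h j).2 (hp j hj))

/-- the forward map of the block bijection -/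
def Fmap (S T : ℕ → Prop) (m k j : ℕ) (hm2 : 2 ≤ m)
    (hST : ∀ x, S x ↔ (x = 1 ∨ ∃ i, T i ∧ x = m * i))
    (x : Σ a : Fin (k + 1), {q : (k - (a : ℕ)).Partition // ∀ y ∈ q.parts, T y}) :
    {p : (m * k + j).Partition // ∀ y ∈ p.parts, S y} :=
  ⟨⟨Multiset.replicate (m * (x.1 : ℕ) + j) 1 + x.2.1.parts.map (fun i => m * i),
    by
      intro i hi
      simp only [Multiset.mem_add, Multiset.mem_replicate, Multiset.mem_map] at hi
      rcases hi with ⟨-, rfl⟩ | ⟨b, hb, rfl⟩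
      · omega
      · have := x.2.1.parts_pos hb; positivity,
    by
      have ha : (x.1 : ℕ) ≤ k := by omega
      have hs : (x.2.1.parts.map (fun i => m * i)).sum = m * (k - (x.1 : ℕ)) := by
        rw [show (fun i => m * i) = (fun i => m * id i) from rfl, Multiset.sum_map_mul_left,
          Multiset.map_id, x.2.1.parts_sum]
      rw [Multiset.sum_add, Multiset.sum_replicate, smul_eq_mul, mul_one, hs]
      have h2 : m * (x.1 : ℕ) + m * (k - (x.1 : ℕ)) = m * k := by
        rw [← Nat.mul_add]; congr 1; omega
      omega⟩,
    by
      intro y hy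
      simp only [Multiset.mem_add, Multiset.mem_replicate, Multiset.mem_map] at hy
      rcases hy with ⟨-, rfl⟩ | ⟨b, hb, rfl⟩
      · exact (hST 1).2 (Or.inl rfl)
      · exact (hST _).2 (Or.inr ⟨b, x.2.2 b hb, rfl⟩)⟩

lemma cnt_block (S T : ℕ → Prop) (m k j : ℕ) (hm2 : 2 ≤ m) (hj : j < m)
    (hST : ∀ x, S x ↔ (x = 1 ∨ ∃ i, T i ∧ x = m * i)) :
    cnt S (m * k + j) = ∑ a ∈ Finset.range (k + 1), cnt T a := by
  classical
  have count_map_one : ∀ (s : Multiset ℕ), (∀ b ∈ s, 0 < b) →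
      Multiset.count 1 (s.map (fun i => m * i)) = 0 := by
    intro s hs
    rw [Multiset.count_eq_zero]
    intro hmem
    rw [Multiset.mem_map] at hmem
    obtain ⟨b, hb, hb1⟩ := hmem
    have := hs b hb
    have : m ≤ m * b := Nat.le_mul_of_pos_right m (hs b hb)
    omega
  have hbij : Function.Bijective (Fmap S T m k j hm2 hST) := by
    constructor
    · rintro ⟨⟨a, ha⟩, ⟨q, hq⟩⟩ ⟨⟨a', ha'⟩, ⟨q', hq'⟩⟩ hxy
      have hparts : Multiset.replicate (m * a + j) 1 + q.parts.map (fun i => m * i)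
          = Multiset.replicate (m * a' + j) 1 + q'.parts.map (fun i => m * i) :=
        congrArg (fun z => z.1.parts) hxy
      have hcnt := congrArg (Multiset.count 1) hparts
      simp only [Multiset.count_add, Multiset.count_replicate_self,
        count_map_one q.parts (fun b hb => q.parts_pos hb),
        count_map_one q'.parts (fun b hb => q'.parts_pos hb)] at hcnt
      have haa : a = a' := by
        have : m * a = m * a' := by omega
        exact Nat.eq_of_mul_eq_mul_left (by omega) this
      subst haa
      have hmap : q.parts.map (fun i => m * i) = q'.parts.map (fun i => m * i) := by
        have := hparts
        exact add_left_cancel this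
      have hqp : q.parts = q'.parts :=
        Multiset.map_injective (fun b c h => Nat.eq_of_mul_eq_mul_left (by omega) h) hmap
      have hqq : q = q' := Nat.Partition.ext hqp
      subst hqq
      rfl
    · rintro ⟨p, hp⟩
      set c := p.parts.count 1 with hc_def
      set B := p.parts.filter (fun x => ¬ x = 1) with hB_def
      have hsplit : p.parts.filter (fun x => x = 1) + B = p.parts :=
        Multiset.filter_add_not _ _
      have hrep : p.parts.filter (fun x => x = 1) = Multiset.replicate c 1 :=
        Multiset.filter_eq' _ _
      have hBfact : ∀ x ∈ B, m * (x / m) = x ∧ T (x / m) ∧ 0 < x / m := by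
        intro x hx
        have hxp : x ∈ p.parts := Multiset.mem_of_mem_filter hx
        have hx1 : ¬ x = 1 := (Multiset.mem_filter.1 hx).2
        have hSx : S x := hp x hxp
        rcases (hST x).1 hSx with h1 | ⟨i, hTi, rfl⟩
        · exact absurd h1 hx1
        · have hipos : 0 < i := by
            rcases Nat.eq_zero_or_pos i with rfl | h
            · exfalso; have := p.parts_pos hxp; omega
            · exact h
          rw [Nat.mul_div_cancel_left i (by omega : 0 < m)]
          exact ⟨rfl, hTi, hipos⟩
      set q' := B.map (fun x => x / m) with hq'_def
      have hq'B : q'.map (fun i => m * i) = B := by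
        rw [hq'_def, Multiset.map_map]
        have : ∀ x ∈ B, ((fun i => m * i) ∘ fun x => x / m) x = id x := by
          intro x hx; exact (hBfact x hx).1
        rw [Multiset.map_congr rfl this, Multiset.map_id]
      have hq'sum : m * q'.sum = B.sum := by
        conv_rhs => rw [← hq'B]
        rw [show (fun i => m * i) = (fun i => m * id i) from rfl, Multiset.sum_map_mul_left,
          Multiset.map_id]
      have hsum : c + m * q'.sum = m * k + j := by
        rw [hq'sum]
        have := p.parts_sum
        rw [← hsplit] at this
        rw [Multiset.sum_add, hrep, Multiset.sum_replicate, smul_eq_mul, mul_one] at this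
        omega
      have hsk : q'.sum ≤ k := by
        by_contra h
        have : k + 1 ≤ q'.sum := by omega
        have : m * (k + 1) ≤ m * q'.sum := Nat.mul_le_mul_left m this
        have h2 : m * (k + 1) = m * k + m := by ring
        omega
      set a := k - q'.sum with ha_def
      have hca : c = m * a + j := by
        have h2 : m * a + m * q'.sum = m * k := by
          rw [← Nat.mul_add]; congr 1; omega
        omega
      refine ⟨⟨⟨a, by omega⟩, ⟨⟨q', ?_, ?_⟩, ?_⟩⟩, ?_⟩
      · intro i hi
        obtain ⟨x, hx, rfl⟩ := Multiset.mem_map.1 hi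
        exact (hBfact x hx).2.2
      · simp only; omega
      · intro y hy
        obtain ⟨x, hx, rfl⟩ := Multiset.mem_map.1 hy
        exact (hBfact x hx).2.1
      · apply Subtype.ext
        apply Nat.Partition.ext
        show Multiset.replicate (m * a + j) 1 + q'.map (fun i => m * i) = p.parts
        rw [← hca, hq'B, ← hrep]
        exact hsplit
  have hcard := Nat.card_congr (Equiv.ofBijective _ hbij).symm
  rw [cnt, hcard]
  have hfin : ∀ a : Fin (k + 1), Finite {q : (k - (a : ℕ)).Partition // ∀ y ∈ q.parts, T y} :=
    fun a => Subtype.finite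
  letI : ∀ a : Fin (k + 1), Fintype {q : (k - (a : ℕ)).Partition // ∀ y ∈ q.parts, T y} :=
    fun a => Fintype.ofFinite _
  rw [Nat.card_eq_fintype_card, Fintype.card_sigma]
  have : ∀ a : Fin (k + 1), Fintype.card {q : (k - (a : ℕ)).Partition // ∀ y ∈ q.parts, T y}
      = cnt T (k - (a : ℕ)) := by
    intro a
    rw [cnt, Nat.card_eq_fintype_card]
  simp only [this]
  rw [Fin.sum_univ_eq_sum_range (fun a => cnt T (k - a)) (k + 1)]
  exact Finset.sum_range_reflect (fun a => cnt T a) (k + 1)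

/-! ### Layer 3: the shifted part-sets and the main induction -/

def Pset (m : ℕ → ℕ) (s : ℕ) (x : ℕ) : Prop :=
  ∃ r : ℕ, x = ∏ i ∈ Finset.range r, m (s + 1 + i)

noncomputable def b (m : ℕ → ℕ) (s n : ℕ) : ℕ := cnt (Pset m s) n

lemma prod_shift (m : ℕ → ℕ) (s r' : ℕ) :
    ∏ i ∈ Finset.range (r' + 1), m (s + 1 + i)
      = m (s + 1) * ∏ i ∈ Finset.range r', m (s + 1 + 1 + i) := by
  rw [Finset.prod_range_succ' (fun i => m (s + 1 + i)) r', mul_comm]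
  simp only [Nat.add_zero]
  exact congrArg₂ (· * ·) rfl (Finset.prod_congr rfl fun i _ => by
    congr 1
    omega)

lemma Pset_iff (m : ℕ → ℕ) (s : ℕ) : ∀ x : ℕ,
    Pset m s x ↔ (x = 1 ∨ ∃ i, Pset m (s + 1) i ∧ x = m (s + 1) * i) := by
  intro x
  constructor
  · rintro ⟨r, rfl⟩
    cases r with
    | zero => left; simp
    | succ r' =>
        right
        exact ⟨∏ i ∈ Finset.range r', m (s + 1 + 1 + i), ⟨r', rfl⟩, prod_shift m s r'⟩
  · rintro (rfl | ⟨i, ⟨r', rfl⟩, rfl⟩)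
    · exact ⟨0, by simp⟩
    · exact ⟨r' + 1, (prod_shift m s r').symm⟩

lemma bblock (m : ℕ → ℕ) (s k j : ℕ) (hm2 : 2 ≤ m (s + 1)) (hj : j < m (s + 1)) :
    b m s (m (s + 1) * k + j) = ∑ a ∈ Finset.range (k + 1), b m (s + 1) a :=
  cnt_block (Pset m s) (Pset m (s + 1)) (m (s + 1)) k j hm2 hj (Pset_iff m s)

lemma sum_range_mul_block {M : Type*} [AddCommMonoid M] (f : ℕ → M) (m K : ℕ) :
    ∑ i ∈ Finset.range (m * K), f i
      = ∑ q ∈ Finset.range K, ∑ j ∈ Finset.range m, f (m * q + j) := by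
  induction K with
  | zero => simp
  | succ K ih =>
      rw [show m * (K + 1) = m * K + m from by ring, Finset.sum_range_add, ih,
        Finset.sum_range_succ]

lemma main_ind (m : ℕ → ℕ) (hm : ∀ i, 1 ≤ i → 2 ≤ m i)
    (hprime : ∀ r, 1 ≤ r → ∀ p : ℕ, p.Prime → p ∣ m r → r ≤ p) (r : ℕ) :
    ∀ d t, t + d = r → 1 ≤ t → ∀ w : ℕ → ℤ, Δ^[t] w = 0 → ∀ n : ℕ,
      ((∏ u ∈ Finset.Icc (t + 1) r, m u : ℕ) : ℤ) ∣
        ∑ i ∈ Finset.range ((∏ u ∈ Finset.Icc (t + 1) r, m u) * n),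
          w ((∏ u ∈ Finset.Icc (t + 1) r, m u) * n - 1 - i) * (b m t i : ℤ) := by
  intro d
  induction d with
  | zero =>
      intro t htd ht1 w hw n
      rw [Finset.Icc_eq_empty (by omega : ¬ t + 1 ≤ r)]
      simp
  | succ d ih =>
      intro t htd ht1 w hw n
      set m' := m (t + 1) with hm'_def
      set Q := ∏ u ∈ Finset.Icc (t + 2) r, m u with hQ_def
      have hm'2 : 2 ≤ m' := hm (t + 1) (by omega)
      have hsplit : ∏ u ∈ Finset.Icc (t + 1) r, m u = m' * Q := by
        have h1 : Finset.Icc (t + 1) r = insert (t + 1) (Finset.Icc (t + 2) r) := by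
          ext u; simp only [Finset.mem_Icc, Finset.mem_insert]; omega
        rw [h1, Finset.prod_insert (by simp only [Finset.mem_Icc]; omega)]
      rw [hsplit, mul_assoc]
      set K := Q * n with hK_def
      set v : ℕ → ℤ := fun x => ∑ l ∈ Finset.range (m' * x), w l with hv_def
      -- divisibility of the block sums of w
      have hv : ∀ x, (m' : ℤ) ∣ v x := by
        intro x
        have hnewt : v x = ∑ e ∈ Finset.range t, Δ^[e] w 0 * ((m' * x).choose (e + 1) : ℤ) := by
          rw [hv_def]
          simp only
          rw [Finset.sum_congr rfl (fun l _ => newton_trunc t w hw l), Finset.sum_comm]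
          exact Finset.sum_congr rfl fun e _ => by rw [← Finset.mul_sum, hockey]
        rw [hnewt]
        apply Finset.dvd_sum
        intro e he
        simp only [Finset.mem_range] at he
        apply Dvd.dvd.mul_left
        apply m_dvd_choose
        intro p hp hpd
        have := hprime (t + 1) (by omega) p hp hpd
        omega
      set w' : ℕ → ℤ := fun u => v (u + 1) / (m' : ℤ) with hw'_def
      have hw'v : ∀ u, (m' : ℤ) * w' u = v (u + 1) := fun u =>
        Int.mul_ediv_cancel' (hv (u + 1))
      -- degree bound for w'
      have hvdeg : Δ^[t + 1] (fun u => v (u + 1)) = 0 := by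
        have hΔ : Δ (fun u => v (u + 1))
            = fun u => ∑ i ∈ Finset.range m', w (m' * u + (m' + i)) := by
          funext u
          show v (u + 1 + 1) - v (u + 1) = _
          rw [hv_def]
          simp only
          rw [show m' * (u + 1 + 1) = m' * (u + 1) + m' from by ring, Finset.sum_range_add]
          rw [add_sub_cancel_left]
          exact Finset.sum_congr rfl fun i _ => by congr 1; ring
        rw [Function.iterate_succ_apply, hΔ]
        exact delta_iter_sum_zero t _ _ (fun i _ => delta_iter_comp t w hw m' (m' + i))
      have hw'deg : Δ^[t + 1] w' = 0 := by
        funext u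
        have h1 := congrFun (delta_iter_smul (t + 1) (m' : ℤ) w') u
        have h2 : (fun x => (m' : ℤ) * w' x) = fun u => v (u + 1) := funext fun x => hw'v x
        rw [h2, hvdeg] at h1
        have hm'0 : ((m' : ℤ)) ≠ 0 := by
          have : (0 : ℤ) < (m' : ℤ) := by exact_mod_cast (by omega : 0 < m')
          omega
        have h3 : (0 : ℤ) = (m' : ℤ) * Δ^[t + 1] w' u := h1
        have h4 : (m' : ℤ) * Δ^[t + 1] w' u = 0 := h3.symm
        rcases mul_eq_zero.1 h4 with h | h
        · exact absurd h hm'0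
        · exact h
      -- block decomposition
      rw [sum_range_mul_block (fun i => w (m' * K - 1 - i) * (b m t i : ℤ)) m' K]
      have hinner : ∀ q ∈ Finset.range K,
          ∑ j ∈ Finset.range m', w (m' * K - 1 - (m' * q + j)) * (b m t (m' * q + j) : ℤ)
            = (∑ a ∈ Finset.range (q + 1), (b m (t + 1) a : ℤ)) * (v (K - q) - v (K - q - 1)) := by
        intro q hq
        simp only [Finset.mem_range] at hq
        have hb : ∀ j, j < m' → (b m t (m' * q + j) : ℤ)
            = ∑ a ∈ Finset.range (q + 1), (b m (t + 1) a : ℤ) := by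
          intro j hj
          rw [bblock m t q j hm'2 hj, Nat.cast_sum]
        have step1 : ∑ j ∈ Finset.range m', w (m' * K - 1 - (m' * q + j)) * (b m t (m' * q + j) : ℤ)
            = (∑ j ∈ Finset.range m', w (m' * K - 1 - (m' * q + j)))
                * ∑ a ∈ Finset.range (q + 1), (b m (t + 1) a : ℤ) := by
          rw [Finset.sum_mul]
          exact Finset.sum_congr rfl fun j hj => by
            rw [hb j (Finset.mem_range.1 hj)]
        rw [step1, mul_comm]
        congr 1
        -- weight-sum evaluation
        have hmA : m' * (K - q) = m' * (K - q - 1) + m' := by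
          have h : K - q = (K - q - 1) + 1 := by omega
          conv_lhs => rw [h]
          ring
        have harg : ∀ j, j < m' → m' * K - 1 - (m' * q + j) = m' * (K - q - 1) + (m' - 1 - j) := by
          intro j hj
          have h1 : m' * K = m' * q + m' * (K - q) := by
            rw [← Nat.mul_add]; congr 1; omega
          have h2 := hmA
          set B1 := m' * q
          set B2 := m' * (K - q - 1)
          set B3 := m' * (K - q)
          omega
        rw [Finset.sum_congr rfl (fun j hj => by rw [harg j (Finset.mem_range.1 hj)])]
        rw [Finset.sum_range_reflect (fun j => w (m' * (K - q - 1) + j)) m']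
        rw [hv_def]
        simp only
        rw [hmA, Finset.sum_range_add]
        ring
      rw [Finset.sum_congr rfl hinner]
      -- Abel summation
      have habel : ∑ q ∈ Finset.range K,
          (∑ a ∈ Finset.range (q + 1), (b m (t + 1) a : ℤ)) * (v (K - q) - v (K - q - 1))
            = ∑ a ∈ Finset.range K, (b m (t + 1) a : ℤ) * v (K - a) := by
        have e1 : ∀ q ∈ Finset.range K,
            (∑ a ∈ Finset.range (q + 1), (b m (t + 1) a : ℤ)) * (v (K - q) - v (K - q - 1))
              = ∑ a ∈ Finset.range (q + 1), (b m (t + 1) a : ℤ) * (v (K - q) - v (K - q - 1)) :=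
          fun q _ => Finset.sum_mul _ _ _
        rw [Finset.sum_congr rfl e1]
        rw [Finset.sum_comm' (t' := Finset.range K) (s' := fun a => Finset.Ico a K)
          (by intro q a
              simp only [Finset.mem_range, Finset.mem_Ico]
              omega)]
        apply Finset.sum_congr rfl
        intro a ha
        simp only [Finset.mem_range] at ha
        rw [← Finset.mul_sum]
        congr 1
        rw [Finset.sum_Ico_eq_sum_range]
        have hterm : ∀ i, v (K - (a + i)) - v (K - (a + i) - 1)
            = v (K - (a + i)) - v (K - (a + (i + 1))) := by
          intro i
          rw [show K - (a + i) - 1 = K - (a + (i + 1)) from by omega]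
        have hv0 : v 0 = 0 := by rw [hv_def]; simp
        rw [Finset.sum_congr rfl (fun i _ => hterm i),
          Finset.sum_range_sub' (fun i => v (K - (a + i))) (K - a),
          show K - (a + (K - a)) = 0 from by omega, hv0, sub_zero]
        norm_num
      rw [habel]
      -- rewrite v (K - a) via w' and conclude with ih
      have hva : ∀ a ∈ Finset.range K,
          (b m (t + 1) a : ℤ) * v (K - a) = (m' : ℤ) * (w' (K - 1 - a) * (b m (t + 1) a : ℤ)) := by
        intro a ha
        simp only [Finset.mem_range] at ha
        rw [show K - a = (K - 1 - a) + 1 from by omega, ← hw'v (K - 1 - a)]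
        ring
      rw [Finset.sum_congr rfl hva, ← Finset.mul_sum]
      have hih := ih (t + 1) (by omega) (by omega) w' hw'deg n
      rw [← hQ_def, ← hK_def] at hih
      rw [Nat.cast_mul]
      exact mul_dvd_mul_left _ hih

/-! ### Final assembly -/

theorem pM_congruence_aux (m : ℕ → ℕ) (hm0 : m 0 = 1)
    (hm : ∀ i, 1 ≤ i → 2 ≤ m i)
    (hprime : ∀ r, 1 ≤ r → ∀ p : ℕ, p.Prime → p ∣ m r → r ≤ p)
    (n r : ℕ) (hn : 1 ≤ n) (hr : 1 ≤ r) :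
    (∏ t ∈ Finset.Icc 2 r, m t) ∣ pM m ((∏ t ∈ Finset.Icc 1 r, m t) * n - 1) := by
  have hpm : ∀ N, pM m N = b m 0 N := by
    intro N
    show cnt (fun j => ∃ r : ℕ, j = ∏ i ∈ Finset.range (r + 1), m i) N = cnt (Pset m 0) N
    apply cnt_congr
    intro x
    constructor
    · rintro ⟨r', rfl⟩
      refine ⟨r', ?_⟩
      rw [Finset.prod_range_succ' (fun i => m i) r', hm0, mul_one]
      exact Finset.prod_congr rfl fun i _ => by congr 1; omega
    · rintro ⟨r', rfl⟩
      refine ⟨r', ?_⟩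
      rw [Finset.prod_range_succ' (fun i => m i) r', hm0, mul_one]
      exact Finset.prod_congr rfl fun i _ => by congr 1; omega
  set Q := ∏ t ∈ Finset.Icc 2 r, m t with hQ_def
  have hQpos : 0 < Q := Finset.prod_pos fun t ht => by
    have := hm t (by simp only [Finset.mem_Icc] at ht; omega)
    omega
  have hm1 : 2 ≤ m 1 := hm 1 le_rfl
  have hsplit1 : ∏ t ∈ Finset.Icc 1 r, m t = m 1 * Q := by
    have h1 : Finset.Icc 1 r = insert 1 (Finset.Icc 2 r) := by
      ext u; simp only [Finset.mem_Icc, Finset.mem_insert]; omega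
    rw [h1, Finset.prod_insert (by simp only [Finset.mem_Icc]; omega)]
  have hQn : 1 ≤ Q * n := Nat.mul_pos hQpos (by omega)
  obtain ⟨y, hy⟩ : ∃ y, Q * n = y + 1 := ⟨Q * n - 1, by omega⟩
  have harg : (∏ t ∈ Finset.Icc 1 r, m t) * n - 1 = m 1 * (Q * n - 1) + (m 1 - 1) := by
    rw [hsplit1, mul_assoc, hy]
    rw [show y + 1 - 1 = y from rfl]
    rw [Nat.mul_succ]
    set z := m 1 * y
    omega
  rw [hpm, harg]
  have hb0 := bblock m 0 (Q * n - 1) (m 1 - 1) (by simpa using hm1)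
    (by simpa using (by omega : m 1 - 1 < m 1))
  simp only [Nat.zero_add] at hb0
  rw [hb0, show Q * n - 1 + 1 = Q * n from by omega]
  -- apply the main induction with constant weight 1
  have hmain := main_ind m hm hprime r (r - 1) 1 (by omega) le_rfl (fun _ => (1 : ℤ))
    (by funext x; simp [Δ]) n
  norm_num [one_mul] at hmain
  rw [← hQ_def] at hmain
  have hcast : ∑ i ∈ Finset.range (Q * n), ((b m 1 i : ℤ))
      = ((∑ a ∈ Finset.range (Q * n), b m 1 a : ℕ) : ℤ) := by
    rw [Nat.cast_sum]
  rw [hcast] at hmain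
  exact_mod_cast hmain

end PMaux

/-- If every prime factor `p` of `m_r` satisfies `p ≥ r`, then `∏_{t=2}^{r} m_t`
divides `p_M(m₁ m₂ ⋯ m_r n - 1)` for all positive integers `n`, `r`. -/
theorem pM_congruence_large_prime_factors (m : ℕ → ℕ) (hm0 : m 0 = 1)
    (hm : ∀ i, 1 ≤ i → 2 ≤ m i)
    (hprime : ∀ r, 1 ≤ r → ∀ p : ℕ, p.Prime → p ∣ m r → r ≤ p)
    (n r : ℕ) (hn : 1 ≤ n) (hr : 1 ≤ r) :
    (∏ t ∈ Finset.Icc 2 r, m t) ∣ pM m ((∏ t ∈ Finset.Icc 1 r, m t) * n - 1) := by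
  exact PMaux.pM_congruence_aux m hm0 hm hprime n r hn hr
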